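/- Let ε > 0. For a ∈ ℝ let T_a be the translation operator on L²(ℝ, ℂ), (T_a f)(x) = f(x+a), and for b ∈ ℝ let M_b be the modulation operator (M_b f)(x) = exp(2πibx/ε) f(x). If T is a bounded linear operator on L²(ℝ, ℂ) satisfying T∘T_a = T_a∘T and T∘M_b = M_b∘T for all a, b ∈ ℝ, then T is a scalar multiple of the identity. -/

import Mathlib

open Complex Real MeasureTheory

set_option maxHeartbeats 1000000

noncomputable section HeisenbergCommutant


/-- modulation character -/
def emod (ε b : ℝ) : ℝ → ℂ := fun x => Complex.exp (2 * π * I * ((b * x : ℝ) : ℂ) / (ε : ℂ))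

lemma emod_exponent (ε b x : ℝ) :
    2 * (π:ℂ) * I * ((b * x : ℝ) : ℂ) / (ε : ℂ) = (((2 * π * (b * x) / ε : ℝ)):ℂ) * I := by
  push_cast; ring

lemma emod_norm (ε b x : ℝ) : ‖emod ε b x‖ = 1 := by
  rw [emod, Complex.norm_exp, emod_exponent]
  simp

lemma emod_continuous (ε b : ℝ) : Continuous (emod ε b) := by
  apply Complex.continuous_exp.comp
  fun_prop

lemma emod_zero (ε : ℝ) (x : ℝ) : emod ε 0 x = 1 := by
  simp [emod]

lemma emod_mul (ε b b' x : ℝ) : emod ε b x * emod ε b' x = emod ε (b + b') x := by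
  rw [emod, emod, emod, ← Complex.exp_add]
  congr 1
  push_cast; ring

lemma emod_conj (ε b x : ℝ) : (starRingEnd ℂ) (emod ε b x) = emod ε (-b) x := by
  rw [emod, emod, ← Complex.exp_conj]
  congr 1
  rw [map_div₀]
  simp only [map_mul, Complex.conj_I, Complex.conj_ofReal, map_ofNat]
  push_cast; ring

lemma emod_ne (ε : ℝ) (hε : 0 < ε) {b x y : ℝ} (hb : 0 < b) (hxy : x ≠ y)
    (hsmall : b * |x - y| / ε < 1) : emod ε b x ≠ emod ε b y := by
  intro h
  have hx : emod ε b x = Complex.exp ((((2 * π * (b * x) / ε : ℝ)):ℂ) * I) := by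
    rw [emod, emod_exponent]
  have hy : emod ε b y = Complex.exp ((((2 * π * (b * y) / ε : ℝ)):ℂ) * I) := by
    rw [emod, emod_exponent]
  rw [hx, hy, Complex.exp_eq_exp_iff_exists_int] at h
  obtain ⟨n, hn⟩ := h
  have him := congrArg Complex.im hn
  simp only [Complex.add_im, Complex.mul_im, Complex.ofReal_re, Complex.I_im, Complex.ofReal_im,
    Complex.I_re, Complex.intCast_im, Complex.intCast_re, Complex.mul_re, Complex.re_ofNat,
    Complex.im_ofNat] at him
  -- him : 2 * π * (b * x) / ε = 2 * π * (b * y) / ε + n * (2 * π)  (roughly)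
  have h2π : (0:ℝ) < 2 * π := by positivity
  have hratio : b * (x - y) / ε = (n : ℝ) := by
    ring_nf at him
    have : 2 * π * (b * x / ε) = 2 * π * (b * y / ε + n) := by ring_nf; linarith [him]
    have h3 := mul_left_cancel₀ h2π.ne' this
    rw [mul_sub, sub_div, h3]; ring
  have hn0 : n = 0 := by
    have habs : |(n:ℝ)| < 1 := by
      rw [← hratio, abs_div, abs_mul, abs_of_pos hb, abs_of_pos hε]
      rwa [div_lt_one hε] at hsmall ⊢
    have : |(n:ℤ)| < 1 := by exact_mod_cast habs
    rw [abs_lt] at this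
    omega
  rw [hn0] at hratio
  push_cast at hratio
  rcases div_eq_zero_iff.mp hratio with h | h
  · rcases mul_eq_zero.mp h with h' | h'
    · exact hb.ne' h'
    · exact hxy (by linarith)
  · exact hε.ne' h

lemma heis_core (ε : ℝ) (hε : 0 < ε)
    (T : Lp ℂ 2 (volume : Measure ℝ) →L[ℂ] Lp ℂ 2 (volume : Measure ℝ))
    (hTmod : ∀ b : ℝ, ∀ f g : Lp ℂ 2 (volume : Measure ℝ),
      ((g : ℝ → ℂ) =ᵐ[volume] fun x => emod ε b x * f x) →
      ((T g : ℝ → ℂ) =ᵐ[volume] fun x => emod ε b x * T f x))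
    (n : ℕ) (f g : Lp ℂ 2 (volume : Measure ℝ))
    (hf : ∀ᵐ x ∂(volume : Measure ℝ), x ∉ Set.Icc (-(n:ℝ)) n → (f : ℝ → ℂ) x = 0)
    (hg : ∀ᵐ x ∂(volume : Measure ℝ), x ∉ Set.Icc (-(n:ℝ)) n → (g : ℝ → ℂ) x = 0) :
    (fun x => (starRingEnd ℂ) ((T.adjoint g : ℝ → ℂ) x) * (f : ℝ → ℂ) x)
      =ᵐ[volume] fun x => (starRingEnd ℂ) ((g : ℝ → ℂ) x) * (T f : ℝ → ℂ) x := by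
  set u : Lp ℂ 2 (volume : Measure ℝ) := T.adjoint g with hu
  set p : ℝ → ℂ := fun x => (starRingEnd ℂ) ((u : ℝ → ℂ) x) * (f : ℝ → ℂ) x with hp
  set q : ℝ → ℂ := fun x => (starRingEnd ℂ) ((g : ℝ → ℂ) x) * (T f : ℝ → ℂ) x with hq
  have hp_int : Integrable p volume := by
    have h1 := L2.integrable_inner (𝕜 := ℂ) u f
    simp only [RCLike.inner_apply] at h1
    exact h1.congr (Filter.Eventually.of_forall fun x => mul_comm _ _)
  have hq_int : Integrable q volume := by
    have h1 := L2.integrable_inner (𝕜 := ℂ) g (T f)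
    simp only [RCLike.inner_apply] at h1
    exact h1.congr (Filter.Eventually.of_forall fun x => mul_comm _ _)
  set r : ℝ → ℂ := fun x => p x - q x with hr
  have hr_int : Integrable r volume := hp_int.sub hq_int
  -- vanishing of "Fourier coefficients"
  have hcoef : ∀ b : ℝ, ∫ x, emod ε b x * r x = 0 := by
    intro b
    have hmb : MemLp (fun x => emod ε b x * (f : ℝ → ℂ) x) 2 (volume : Measure ℝ) := by
      refine MemLp.of_le (Lp.memLp f) ?_ ?_
      · exact ((emod_continuous ε b).aestronglyMeasurable.mul (Lp.aestronglyMeasurable f))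
      · filter_upwards with x
        rw [norm_mul, emod_norm, one_mul]
    set fb := hmb.toLp _ with hfb
    have hTb := hTmod b f fb hmb.coeFn_toLp
    have hpe : Integrable (fun x => emod ε b x * p x) volume := by
      have := hp_int.bdd_mul (emod_continuous ε b).aestronglyMeasurable
        (Filter.Eventually.of_forall fun x => le_of_eq (emod_norm ε b x))
      exact this
    have hqe : Integrable (fun x => emod ε b x * q x) volume := by
      have := hq_int.bdd_mul (emod_continuous ε b).aestronglyMeasurable
        (Filter.Eventually.of_forall fun x => le_of_eq (emod_norm ε b x))
      exact this
    have e1 : (inner ℂ g (T fb) : ℂ) = ∫ x, emod ε b x * q x := by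
      rw [L2.inner_def]
      apply integral_congr_ae
      filter_upwards [hTb] with x hx
      rw [RCLike.inner_apply, hx, hq]
      ring
    have e2 : (inner ℂ g (T fb) : ℂ) = ∫ x, emod ε b x * p x := by
      rw [← ContinuousLinearMap.adjoint_inner_left, ← hu, L2.inner_def]
      apply integral_congr_ae
      filter_upwards [hmb.coeFn_toLp] with x hx
      rw [RCLike.inner_apply, hx, hp]
      ring
    have : ∫ x, emod ε b x * r x = (∫ x, emod ε b x * p x) - ∫ x, emod ε b x * q x := by
      rw [← integral_sub hpe hqe]
      apply integral_congr_ae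
      filter_upwards with x
      rw [hr]; ring
    rw [this, ← e2, ← e1, sub_self]
  -- support of r
  have hrK : ∀ᵐ x ∂(volume : Measure ℝ), x ∉ Set.Icc (-(n:ℝ)) n → r x = 0 := by
    filter_upwards [hf, hg] with x hfx hgx hx
    have h1 := hfx hx
    have h2 := hgx hx
    show (starRingEnd ℂ) ((u : ℝ → ℂ) x) * (f : ℝ → ℂ) x
      - (starRingEnd ℂ) ((g : ℝ → ℂ) x) * (T f : ℝ → ℂ) x = 0
    rw [h1, h2]
    simp
  -- Stone-Weierstrass setup
  have hKle : -(n:ℝ) ≤ n := by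
    have : (0:ℝ) ≤ n := Nat.cast_nonneg n
    linarith
  set K : Set ℝ := Set.Icc (-(n:ℝ)) n with hK
  set ρ : ℝ → K := Set.projIcc (-(n:ℝ)) n hKle with hρ
  have hρcont : Continuous ρ := continuous_projIcc
  set gen : ℝ → C(K, ℂ) := fun b =>
    ⟨fun t => emod ε b t.1, (emod_continuous ε b).comp continuous_subtype_val⟩ with hgen
  set s : Set C(K, ℂ) := Set.range gen with hs
  -- span is closed under multiplication and star
  have hone : (1 : C(K, ℂ)) ∈ s := by
    refine ⟨0, ?_⟩
    ext t
    exact emod_zero ε t.1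
  have hmulmem : ∀ x ∈ Submodule.span ℂ s, ∀ y ∈ Submodule.span ℂ s,
      x * y ∈ Submodule.span ℂ s := by
    intro x hx
    induction hx using Submodule.span_induction with
    | mem x hxs =>
      intro y hy
      induction hy using Submodule.span_induction with
      | mem y hys =>
        obtain ⟨b, rfl⟩ := hxs
        obtain ⟨b', rfl⟩ := hys
        apply Submodule.subset_span
        refine ⟨b + b', ?_⟩
        ext t
        exact (emod_mul ε b b' t.1).symm
      | zero => rw [mul_zero]; exact Submodule.zero_mem _
      | add y z hy hz ihy ihz => rw [mul_add]; exact Submodule.add_mem _ ihy ihz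
      | smul c y hy ihy => rw [mul_smul_comm]; exact Submodule.smul_mem _ c ihy
    | zero => intro y hy; rw [zero_mul]; exact Submodule.zero_mem _
    | add x z hx hz ihx ihz =>
      intro y hy; rw [add_mul]; exact Submodule.add_mem _ (ihx y hy) (ihz y hy)
    | smul c x hx ihx =>
      intro y hy; rw [smul_mul_assoc]; exact Submodule.smul_mem _ c (ihx y hy)
  have hstarmem : ∀ x ∈ Submodule.span ℂ s, star x ∈ Submodule.span ℂ s := by
    intro x hx
    induction hx using Submodule.span_induction with
    | mem x hxs =>
      obtain ⟨b, rfl⟩ := hxs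
      apply Submodule.subset_span
      refine ⟨-b, ?_⟩
      ext t
      rw [ContinuousMap.star_apply]
      exact (emod_conj ε b t.1).symm
    | zero => rw [star_zero]; exact Submodule.zero_mem _
    | add x y hx hy ihx ihy => rw [star_add]; exact Submodule.add_mem _ ihx ihy
    | smul c x hx ihx => rw [star_smul]; exact Submodule.smul_mem _ _ ihx
  have hadjoin_span : ∀ ψ ∈ StarAlgebra.adjoin ℂ s, ψ ∈ Submodule.span ℂ s := by
    intro ψ hψ
    induction hψ using StarAlgebra.adjoin_induction with
    | mem x hxs => exact Submodule.subset_span hxs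
    | algebraMap c =>
      have : algebraMap ℂ C(K, ℂ) c = c • (1 : C(K, ℂ)) := by
        rw [Algebra.algebraMap_eq_smul_one]
      rw [this]
      exact Submodule.smul_mem _ c (Submodule.subset_span hone)
    | add x y hx hy ihx ihy => exact Submodule.add_mem _ ihx ihy
    | mul x y hx hy ihx ihy => exact hmulmem x ihx y ihy
    | star x hx ihx => exact hstarmem x ihx
  -- separation of points
  have hsep : (StarAlgebra.adjoin ℂ s).SeparatesPoints := by
    intro x y hxy
    have hval : (x:ℝ) ≠ (y:ℝ) := fun h => hxy (Subtype.ext h)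
    set b : ℝ := ε / (1 + |(x:ℝ) - y|) with hb
    have hd : (0:ℝ) < 1 + |(x:ℝ) - y| := by positivity
    have hbpos : 0 < b := div_pos hε hd
    have hsmall : b * |(x:ℝ) - y| / ε < 1 := by
      rw [hb]
      rw [div_mul_eq_mul_div, div_div]
      rw [div_lt_one (by positivity)]
      have habs : 0 ≤ |(x:ℝ) - y| := abs_nonneg _
      nlinarith
    refine ⟨(gen b : C(K, ℂ)), ⟨gen b, StarAlgebra.subset_adjoin ℂ s ⟨b, rfl⟩, rfl⟩, ?_⟩
    exact emod_ne ε hε hbpos hval hsmall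
  have htop := ContinuousMap.starSubalgebra_topologicalClosure_eq_top_of_separatesPoints
    (StarAlgebra.adjoin ℂ s) hsep
  -- the linear functional
  set lf : C(K, ℂ) → ℂ := fun ψ => ∫ x, ψ (ρ x) * r x with hlf
  have hint_all : ∀ ψ : C(K, ℂ), Integrable (fun x => ψ (ρ x) * r x) volume := by
    intro ψ
    exact hr_int.bdd_mul ((map_continuous ψ).comp hρcont).aestronglyMeasurable
      (Filter.Eventually.of_forall fun x => ψ.norm_coe_le_norm _)
  have hCr : (0:ℝ) ≤ ∫ x, ‖r x‖ := integral_nonneg (fun x => norm_nonneg _)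
  have hLcont : Continuous lf := by
    refine (LipschitzWith.of_dist_le_mul (K := Real.toNNReal (∫ x, ‖r x‖))
      (f := lf) ?_).continuous
    intro ψ φ
    rw [dist_eq_norm, dist_eq_norm]
    have hsub : lf ψ - lf φ = ∫ x, (ψ (ρ x) - φ (ρ x)) * r x := by
      rw [hlf]
      simp only []
      rw [← integral_sub (hint_all ψ) (hint_all φ)]
      congr 1
      funext x
      ring
    rw [hsub]
    calc ‖∫ x, (ψ (ρ x) - φ (ρ x)) * r x‖ ≤ ∫ x, ‖(ψ (ρ x) - φ (ρ x)) * r x‖ :=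
          norm_integral_le_integral_norm _
      _ ≤ ∫ x, ‖ψ - φ‖ * ‖r x‖ := by
          apply integral_mono_of_nonneg
          · filter_upwards with x; positivity
          · exact hr_int.norm.const_mul _
          · filter_upwards with x
            rw [norm_mul]
            apply mul_le_mul_of_nonneg_right _ (norm_nonneg _)
            exact (ψ - φ).norm_coe_le_norm (ρ x)
      _ = ‖ψ - φ‖ * ∫ x, ‖r x‖ := by rw [integral_const_mul]
      _ ≤ (Real.toNNReal (∫ x, ‖r x‖) : ℝ) * ‖ψ - φ‖ := by
          rw [Real.coe_toNNReal _ hCr, mul_comm]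
  have hLgen : ∀ b : ℝ, lf (gen b) = 0 := by
    intro b
    have h1 : lf (gen b) = ∫ x, emod ε b x * r x := by
      apply integral_congr_ae
      filter_upwards [hrK] with x hx
      by_cases hmem : x ∈ K
      · have hproj : ρ x = ⟨x, hmem⟩ := Set.projIcc_of_mem hKle hmem
        rw [hproj]
        rfl
      · rw [hx hmem, mul_zero, mul_zero]
    exact h1.trans (hcoef b)
  have hLspan : ∀ ψ ∈ Submodule.span ℂ s, lf ψ = 0 := by
    intro ψ hψ
    induction hψ using Submodule.span_induction with
    | mem ψ hψs => obtain ⟨b, rfl⟩ := hψs; exact hLgen b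
    | zero =>
      have h1 : lf 0 = ∫ (_ : ℝ), (0:ℂ) := by
        apply integral_congr_ae
        filter_upwards with x
        simp
      rw [h1, integral_zero]
    | add ψ φ hψ hφ ihψ ihφ =>
      have h1 : lf (ψ + φ) = lf ψ + lf φ := by
        show (∫ x, (ψ + φ) (ρ x) * r x) = (∫ x, ψ (ρ x) * r x) + ∫ x, φ (ρ x) * r x
        rw [← integral_add (hint_all ψ) (hint_all φ)]
        congr 1; funext x
        simp only [ContinuousMap.add_apply]; ring
      rw [h1, ihψ, ihφ, add_zero]
    | smul c ψ hψ ihψ =>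
      have h1 : lf (c • ψ) = c * lf ψ := by
        show (∫ x, (c • ψ) (ρ x) * r x) = c * ∫ x, ψ (ρ x) * r x
        rw [← integral_const_mul]
        congr 1; funext x
        simp only [ContinuousMap.smul_apply, smul_eq_mul]; ring
      rw [h1, ihψ, mul_zero]
  have hLall : ∀ ψ : C(K, ℂ), lf ψ = 0 := by
    intro ψ
    have hmem : ψ ∈ closure ((StarAlgebra.adjoin ℂ s : StarSubalgebra ℂ C(K, ℂ)) : Set C(K, ℂ)) := by
      have : ψ ∈ (StarAlgebra.adjoin ℂ s).topologicalClosure := by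
        rw [htop]; trivial
      exact this
    have hclosed : IsClosed {ψ : C(K, ℂ) | lf ψ = 0} :=
      isClosed_eq hLcont continuous_const
    have hsub : ((StarAlgebra.adjoin ℂ s : StarSubalgebra ℂ C(K, ℂ)) : Set C(K, ℂ)) ⊆
        {ψ : C(K, ℂ) | lf ψ = 0} := fun φ hφ => hLspan φ (hadjoin_span φ hφ)
    exact closure_minimal hsub hclosed hmem
  -- conclude r = 0 a.e.
  have hr0 : ∀ᵐ x ∂(volume : Measure ℝ), r x = 0 := by
    apply ae_eq_zero_of_integral_contDiff_smul_eq_zero hr_int.locallyIntegrable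
    intro φ hφ hφc
    set ψ : C(K, ℂ) := ⟨fun t => (φ t.1 : ℂ),
      Complex.continuous_ofReal.comp (hφ.continuous.comp continuous_subtype_val)⟩ with hψ
    refine Eq.trans ?_ (hLall ψ)
    apply integral_congr_ae
    filter_upwards [hrK] with x hx
    by_cases hmem : x ∈ K
    · have hproj : ρ x = ⟨x, hmem⟩ := Set.projIcc_of_mem hKle hmem
      rw [hproj]
      show (φ x) • r x = (φ x : ℂ) * r x
      rw [Complex.real_smul]
    · rw [hx hmem, smul_zero, mul_zero]
  filter_upwards [hr0] with x hx
  exact sub_eq_zero.mp hx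

lemma closedBall_real_eq (S : ℝ) : Metric.closedBall (0:ℝ) S = Set.Icc (-S) S := by
  rw [Real.closedBall_eq_Icc, zero_sub, zero_add]

/-- product of a locally integrable function with a continuous compactly supported function is
integrable -/
lemma mul_cpt_integrable (m h : ℝ → ℂ) (hm : LocallyIntegrable m volume)
    (hc : Continuous h) (hcs : HasCompactSupport h) :
    Integrable (fun x => m x * h x) volume := by
  have h1 : IntegrableOn m (tsupport h) volume := hm.integrableOn_isCompact hcs
  have h2 : Integrable ((tsupport h).indicator m) volume :=
    (integrable_indicator_iff (isClosed_tsupport h).measurableSet).mpr h1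
  obtain ⟨C, hC⟩ := hcs.exists_bound_of_continuous hc
  have h3 : Integrable (fun x => h x * (tsupport h).indicator m x) volume :=
    h2.bdd_mul hc.aestronglyMeasurable (Filter.Eventually.of_forall hC)
  apply h3.congr
  apply Filter.Eventually.of_forall
  intro x
  show h x * (tsupport h).indicator m x = m x * h x
  by_cases hx : x ∈ tsupport h
  · rw [Set.indicator_of_mem hx, mul_comm]
  · simp [Set.indicator_of_notMem hx, image_eq_zero_of_notMem_tsupport hx]

/-- translation-invariantly-pairing locally integrable functions kill mean-zero test functions -/
lemma integral_mul_eq_zero_of_mean_zero (m : ℝ → ℂ) (hm : LocallyIntegrable m volume)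
    (hinv : ∀ (h : ℝ → ℂ), Continuous h → HasCompactSupport h →
      ∀ a : ℝ, (∫ x, m x * h (x + a)) = ∫ x, m x * h x)
    (ψ : ℝ → ℂ) (hψc : Continuous ψ) (hψcs : HasCompactSupport ψ)
    (hψ0 : (∫ x, ψ x) = 0) : ∫ x, m x * ψ x = 0 := by
  classical
  obtain ⟨S₀, hS₀⟩ := hψcs.isBounded.subset_closedBall 0
  set S : ℝ := max S₀ 0 with hSdef
  have hS0 : 0 ≤ S := le_max_right _ _
  have hsupp : tsupport ψ ⊆ Set.Icc (-S) S := by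
    refine subset_trans hS₀ ?_
    rw [← closedBall_real_eq]
    exact Metric.closedBall_subset_closedBall (le_max_left _ _)
  have hψzero : ∀ x : ℝ, x ∉ Set.Icc (-S) S → ψ x = 0 := fun x hx =>
    image_eq_zero_of_notMem_tsupport (fun hmem => hx (hsupp hmem))
  have hInt : ∀ a b : ℝ, IntervalIntegrable ψ volume a b := fun a b =>
    hψc.intervalIntegrable a b
  -- the primitive
  set h : ℝ → ℂ := fun x => ∫ t in (-(S+1))..x, ψ t with hhdef
  have hcont_h : Continuous h := intervalIntegral.continuous_primitive hInt _
  have hzero_h : ∀ x : ℝ, x ∉ Set.Icc (-(S+1)) S → h x = 0 := by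
    intro x hx
    rw [Set.mem_Icc, not_and_or, not_le, not_le] at hx
    rcases hx with hx | hx
    · show (∫ t in (-(S+1))..x, ψ t) = 0
      have : Set.EqOn ψ 0 (Set.uIcc (-(S+1)) x) := by
        intro t ht
        have h1 : Set.uIcc (-(S+1)) x = Set.Icc x (-(S+1)) :=
          Set.uIcc_of_ge (by linarith)
        rw [h1, Set.mem_Icc] at ht
        exact hψzero t (fun hmem => by rw [Set.mem_Icc] at hmem; linarith [hmem.1, ht.2])
      rw [intervalIntegral.integral_congr this]
      simp
    · show (∫ t in (-(S+1))..x, ψ t) = 0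
      have : (∫ t in (-(S+1))..x, ψ t) = ∫ t, ψ t := by
        apply intervalIntegral.integral_eq_integral_of_support_subset
        refine subset_trans (subset_trans subset_closure hsupp) ?_
        intro t ht
        rw [Set.mem_Icc] at ht
        exact ⟨by linarith [ht.1], by linarith [ht.2]⟩
      rw [this, hψ0]
  have hcs_h : HasCompactSupport h :=
    HasCompactSupport.intro isCompact_Icc hzero_h
  have hdiffq : ∀ a x : ℝ, h (x + a) - h x = ∫ t in x..(x+a), ψ t := by
    intro a x
    have := intervalIntegral.integral_add_adjacent_intervals (hInt (-(S+1)) x) (hInt x (x+a))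
    show (∫ t in (-(S+1))..(x+a), ψ t) - (∫ t in (-(S+1))..x, ψ t) = ∫ t in x..(x+a), ψ t
    linear_combination -this
  -- translates of h are continuous with compact support
  have htrans_c : ∀ a : ℝ, Continuous (fun x => h (x + a)) := fun a =>
    hcont_h.comp (continuous_add_right a)
  have htrans_cs : ∀ a : ℝ, HasCompactSupport (fun x => h (x + a)) := fun a =>
    hcs_h.comp_homeomorph (Homeomorph.addRight a)
  -- the integral against difference quotients vanishes
  have hkey : ∀ a : ℝ, (∫ x, m x * ((h (x + a) - h x) / a)) = 0 := by
    intro a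
    have h1 : (∫ x, m x * ((h (x + a) - h x) / a))
        = (a:ℂ)⁻¹ * ∫ x, (m x * h (x + a) - m x * h x) := by
      rw [← integral_const_mul]
      congr 1; funext x; ring
    rw [h1, integral_sub (mul_cpt_integrable m _ hm (htrans_c a) (htrans_cs a))
      (mul_cpt_integrable m _ hm hcont_h hcs_h), hinv h hcont_h hcs_h a, sub_self, mul_zero]
  -- the final estimate
  have hJ : IntegrableOn (fun x => ‖m x‖) (Set.Icc (-(S+2)) (S+1)) volume :=
    (hm.integrableOn_isCompact isCompact_Icc).norm
  set CJ : ℝ := ∫ x in Set.Icc (-(S+2)) (S+1), ‖m x‖ with hCJ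
  have hCJ0 : 0 ≤ CJ := integral_nonneg (fun x => norm_nonneg _)
  have hbound : ∀ δ : ℝ, 0 < δ → ‖∫ x, m x * ψ x‖ ≤ δ * CJ := by
    intro δ hδ
    -- uniform continuity of ψ
    have hψu : UniformContinuous ψ :=
      hψc.uniformContinuous_of_tendsto_cocompact hψcs.is_zero_at_infty
    obtain ⟨η, hη, hηδ⟩ := Metric.uniformContinuous_iff.mp hψu δ hδ
    set a : ℝ := min (η / 2) 1 with hadef
    have ha0 : 0 < a := lt_min (by linarith) one_pos
    have ha1 : a ≤ 1 := min_le_right _ _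
    have haη : a < η := lt_of_le_of_lt (min_le_left _ _) (by linarith)
    -- pointwise bound on the difference
    have hptw : ∀ x : ℝ, ‖ψ x - (h (x + a) - h x) / a‖ ≤ δ := by
      intro x
      rw [hdiffq a x]
      have hc : (∫ t in x..(x+a), ψ x) = (a:ℂ) * ψ x := by
        rw [intervalIntegral.integral_const]
        rw [add_sub_cancel_left]
        rw [Complex.real_smul]
      have h2 : ψ x - (∫ t in x..(x+a), ψ t) / a
          = (∫ t in x..(x+a), (ψ x - ψ t)) / a := by
        have haC : (a:ℂ) ≠ 0 := by exact_mod_cast ha0.ne'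
        rw [intervalIntegral.integral_sub (intervalIntegrable_const) (hInt x (x+a)), hc]
        rw [sub_div, mul_div_cancel_left₀ _ haC]
      rw [h2]
      have h3 : ‖∫ t in x..(x+a), (ψ x - ψ t)‖ ≤ δ * |x + a - x| := by
        apply intervalIntegral.norm_integral_le_of_norm_le_const
        intro t ht
        rw [Set.uIoc_of_le (by linarith)] at ht
        rw [Set.mem_Ioc] at ht
        have : dist t x < η := by
          rw [Real.dist_eq, abs_lt]
          constructor <;> [linarith [ht.1]; linarith [ht.2]]
        have := hηδ this
        rw [dist_comm] at this
        exact le_of_lt (by rwa [Complex.dist_eq] at this)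
      rw [norm_div]
      rw [add_sub_cancel_left, abs_of_pos ha0] at h3
      rw [Complex.norm_real, Real.norm_eq_abs, abs_of_pos ha0]
      rw [div_le_iff₀ ha0]
      linarith
    -- support of the difference
    have hsuppw : ∀ x : ℝ, x ∉ Set.Icc (-(S+2)) (S+1) → ψ x - (h (x + a) - h x) / a = 0 := by
      intro x hx
      rw [Set.mem_Icc, not_and_or, not_le, not_le] at hx
      have hψx : ψ x = 0 := by
        apply hψzero
        rw [Set.mem_Icc, not_and_or, not_le, not_le]
        rcases hx with hx | hx
        · left; linarith
        · right; linarith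
      have hhx : h x = 0 := by
        apply hzero_h
        rw [Set.mem_Icc, not_and_or, not_le, not_le]
        rcases hx with hx | hx
        · left; linarith
        · right; linarith
      have hhxa : h (x + a) = 0 := by
        apply hzero_h
        rw [Set.mem_Icc, not_and_or, not_le, not_le]
        rcases hx with hx | hx
        · left; linarith
        · right; linarith
      rw [hψx, hhx, hhxa]
      simp
    -- put it together
    have hmw_int : Integrable (fun x => m x * (ψ x - (h (x + a) - h x) / a)) volume := by
      have : Continuous (fun x => ψ x - (h (x + a) - h x) / a) := by
        apply hψc.sub
        exact ((htrans_c a).sub hcont_h).div_const _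
      apply mul_cpt_integrable m _ hm this
      apply HasCompactSupport.intro isCompact_Icc hsuppw
    have hDsupp : ∀ x : ℝ, x ∉ Set.Icc (-(S+2)) (S+1) → (h (x + a) - h x) / a = 0 := by
      intro x hx
      rw [Set.mem_Icc, not_and_or, not_le, not_le] at hx
      have hhx : h x = 0 := by
        apply hzero_h
        rw [Set.mem_Icc, not_and_or, not_le, not_le]
        rcases hx with hx | hx
        · left; linarith
        · right; linarith
      have hhxa : h (x + a) = 0 := by
        apply hzero_h
        rw [Set.mem_Icc, not_and_or, not_le, not_le]
        rcases hx with hx | hx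
        · left; linarith
        · right; linarith
      rw [hhx, hhxa]
      simp
    have hmD_int : Integrable (fun x => m x * ((h (x + a) - h x) / a)) volume := by
      apply mul_cpt_integrable m _ hm (((htrans_c a).sub hcont_h).div_const _)
      exact HasCompactSupport.intro isCompact_Icc hDsupp
    have hsplit : (∫ x, m x * ψ x)
        = (∫ x, m x * (ψ x - (h (x + a) - h x) / a))
          + ∫ x, m x * ((h (x + a) - h x) / a) := by
      rw [← integral_add hmw_int hmD_int]
      congr 1; funext x; ring
    rw [hsplit, hkey a, add_zero]
    calc ‖∫ x, m x * (ψ x - (h (x + a) - h x) / a)‖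
        ≤ ∫ x, ‖m x * (ψ x - (h (x + a) - h x) / a)‖ := norm_integral_le_integral_norm _
      _ = ∫ x in Set.Icc (-(S+2)) (S+1), ‖m x * (ψ x - (h (x + a) - h x) / a)‖ := by
          symm
          apply setIntegral_eq_integral_of_forall_compl_eq_zero
          intro x hx
          rw [hsuppw x hx, mul_zero, norm_zero]
      _ ≤ ∫ x in Set.Icc (-(S+2)) (S+1), ‖m x‖ * δ := by
          apply setIntegral_mono_on
          · exact hmw_int.norm.integrableOn
          · exact hJ.mul_const δ
          · exact measurableSet_Icc
          · intro x _
            rw [norm_mul]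
            exact mul_le_mul_of_nonneg_left (hptw x) (norm_nonneg _)
      _ = δ * CJ := by
          rw [integral_mul_const, mul_comm]
  -- conclude
  have : ‖∫ x, m x * ψ x‖ = 0 := by
    by_contra hne
    have hpos : 0 < ‖∫ x, m x * ψ x‖ := lt_of_le_of_ne (norm_nonneg _) (Ne.symm hne)
    have hC1 : (0:ℝ) < CJ + 1 := by linarith
    have h1 := hbound (‖∫ x, m x * ψ x‖ / (2 * (CJ + 1))) (by positivity)
    have h2 : ‖∫ x, m x * ψ x‖ / (2 * (CJ + 1)) * CJ < ‖∫ x, m x * ψ x‖ := by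
      rw [div_mul_eq_mul_div, div_lt_iff₀ (by positivity)]
      nlinarith
    linarith
  exact norm_eq_zero.mp this

/-- Irreducibility of the Heisenberg representation `𝓗_ε` of `Heis(ℝ²)` on
`L²(ℝ)`: a bounded operator `T` commuting with all translations
`(T_a f)(x) = f(x+a)` and all modulations `(M_b f)(x) = exp(2πibx/ε)f(x)` is a
scalar multiple of the identity. -/
theorem commutant_of_heisenberg_representation_is_scalar
    (ε : ℝ) (hε : 0 < ε)
    (T : Lp ℂ 2 (volume : Measure ℝ) →L[ℂ] Lp ℂ 2 (volume : Measure ℝ))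
    (hTtrans : ∀ a : ℝ, ∀ f g : Lp ℂ 2 (volume : Measure ℝ),
      ((g : ℝ → ℂ) =ᵐ[volume] fun x => f (x + a)) →
      ((T g : ℝ → ℂ) =ᵐ[volume] fun x => T f (x + a)))
    (hTmod : ∀ b : ℝ, ∀ f g : Lp ℂ 2 (volume : Measure ℝ),
      ((g : ℝ → ℂ) =ᵐ[volume] fun x =>
        Complex.exp (2 * π * I * ((b * x : ℝ) : ℂ) / (ε : ℂ)) * f x) →
      ((T g : ℝ → ℂ) =ᵐ[volume] fun x =>
        Complex.exp (2 * π * I * ((b * x : ℝ) : ℂ) / (ε : ℂ)) * T f x)) :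
    ∃ c : ℂ, ∀ f : Lp ℂ 2 (volume : Measure ℝ), T f = c • f := by
  classical
  have hTmod' : ∀ b : ℝ, ∀ f g : Lp ℂ 2 (volume : Measure ℝ),
      ((g : ℝ → ℂ) =ᵐ[volume] fun x => emod ε b x * f x) →
      ((T g : ℝ → ℂ) =ᵐ[volume] fun x => emod ε b x * T f x) :=
    fun b f g h => hTmod b f g h
  -- the cutoff functions
  set χ : ℕ → Lp ℂ 2 (volume : Measure ℝ) := fun n =>
    indicatorConstLp 2 (measurableSet_Icc (a := -(n:ℝ)) (b := (n:ℝ)))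
      (measure_Icc_lt_top).ne (1:ℂ) with hχdef
  have hχcoe : ∀ n : ℕ, (χ n : ℝ → ℂ)
      =ᵐ[volume] (Set.Icc (-(n:ℝ)) n).indicator (fun _ => 1) := fun n => indicatorConstLp_coeFn
  have hχsupp : ∀ n : ℕ, ∀ᵐ x ∂(volume : Measure ℝ),
      x ∉ Set.Icc (-(n:ℝ)) n → (χ n : ℝ → ℂ) x = 0 := by
    intro n
    filter_upwards [hχcoe n] with x hx hxn
    rw [hx, Set.indicator_of_notMem hxn]
  have hIccSub : ∀ {n n' : ℕ}, n ≤ n' → Set.Icc (-(n:ℝ)) n ⊆ Set.Icc (-(n':ℝ)) n' := by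
    intro n n' h
    apply Set.Icc_subset_Icc
    · exact neg_le_neg (Nat.cast_le.mpr h)
    · exact Nat.cast_le.mpr h
  have hmemIcc : ∀ (x : ℝ) (n : ℕ), x ∈ Set.Icc (-(n:ℝ)) n ↔ |x| ≤ n := by
    intro x n
    rw [Set.mem_Icc, abs_le]
  -- the multiplier candidates
  set v : ℕ → ℝ → ℂ := fun n x => (starRingEnd ℂ) ((T.adjoint (χ n) : ℝ → ℂ) x) with hvdef
  -- core relation
  have hcore : ∀ n n' : ℕ, n ≤ n' → ∀ f : Lp ℂ 2 (volume : Measure ℝ),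
      (∀ᵐ x ∂(volume : Measure ℝ), x ∉ Set.Icc (-(n:ℝ)) n → (f : ℝ → ℂ) x = 0) →
      ((fun x => v n' x * (f : ℝ → ℂ) x)
        =ᵐ[volume] fun x => (starRingEnd ℂ) ((χ n' : ℝ → ℂ) x) * (T f : ℝ → ℂ) x) := by
    intro n n' hnn' f hf
    have hf' : ∀ᵐ x ∂(volume : Measure ℝ), x ∉ Set.Icc (-(n':ℝ)) n' → (f : ℝ → ℂ) x = 0 := by
      filter_upwards [hf] with x hx hxn'
      exact hx (fun hmem => hxn' (hIccSub hnn' hmem))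
    exact heis_core ε hε T hTmod' n' f (χ n') hf' (hχsupp n')
  -- on Icc n, v n' agrees with T (χ n) for any n' ≥ n
  have hvT : ∀ n n' : ℕ, n ≤ n' → ∀ᵐ x ∂(volume : Measure ℝ),
      x ∈ Set.Icc (-(n:ℝ)) n → v n' x = (T (χ n) : ℝ → ℂ) x := by
    intro n n' hnn'
    filter_upwards [hcore n n' hnn' (χ n) (hχsupp n), hχcoe n, hχcoe n'] with x h1 h2 h3 hmem
    rw [h2, Set.indicator_of_mem hmem] at h1
    rw [h3, Set.indicator_of_mem (hIccSub hnn' hmem), map_one, one_mul] at h1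
    rw [mul_one] at h1
    exact h1
  -- the multiplier
  set m : ℝ → ℂ := fun x => v ⌈|x|⌉₊ x with hmdef
  have hm : ∀ n : ℕ, ∀ᵐ x ∂(volume : Measure ℝ),
      x ∈ Set.Icc (-(n:ℝ)) n → m x = v n x := by
    intro n
    have H : ∀ᵐ x ∂(volume : Measure ℝ), ∀ k : ℕ, k ≤ n →
        (x ∈ Set.Icc (-(k:ℝ)) k → v k x = v n x) := by
      rw [ae_all_iff]
      intro k
      by_cases hk : k ≤ n
      · filter_upwards [hvT k k le_rfl, hvT k n hk] with x h1 h2 _ hmem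
        rw [h1 hmem, h2 hmem]
      · filter_upwards with x hk' 
        exact absurd hk' hk
    filter_upwards [H] with x hx hxmem
    have h1 : |x| ≤ (n:ℝ) := (hmemIcc x n).mp hxmem
    have hkle : ⌈|x|⌉₊ ≤ n := Nat.ceil_le.mpr h1
    have hxk : x ∈ Set.Icc (-((⌈|x|⌉₊:ℕ):ℝ)) ((⌈|x|⌉₊:ℕ):ℝ) :=
      (hmemIcc x ⌈|x|⌉₊).mpr (Nat.le_ceil _)
    exact hx ⌈|x|⌉₊ hkle hxk
  -- the multiplication property
  have hP : ∀ (n : ℕ) (f : Lp ℂ 2 (volume : Measure ℝ)),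
      (∀ᵐ x ∂(volume : Measure ℝ), x ∉ Set.Icc (-(n:ℝ)) n → (f : ℝ → ℂ) x = 0) →
      ((T f : ℝ → ℂ) =ᵐ[volume] fun x => m x * (f : ℝ → ℂ) x) := by
    intro n f hf
    have H : ∀ᵐ x ∂(volume : Measure ℝ), ∀ k : ℕ,
        (x ∈ Set.Icc (-((n+k:ℕ):ℝ)) ((n+k:ℕ):ℝ) → (T f : ℝ → ℂ) x = m x * (f : ℝ → ℂ) x) := by
      rw [ae_all_iff]
      intro k
      filter_upwards [hcore n (n+k) (Nat.le_add_right n k) f hf, hχcoe (n+k), hm (n+k)]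
        with x h1 h2 h3 hmem
      rw [h2, Set.indicator_of_mem hmem, map_one, one_mul] at h1
      rw [← h1, h3 hmem]
    filter_upwards [H] with x hx
    apply hx ⌈|x|⌉₊
    rw [hmemIcc]
    push_cast
    calc |x| ≤ (⌈|x|⌉₊ : ℝ) := Nat.le_ceil _
      _ ≤ (n:ℝ) + ⌈|x|⌉₊ := by
          have : (0:ℝ) ≤ n := Nat.cast_nonneg n
          linarith
  -- local integrability of m
  have hmloc : LocallyIntegrable m volume := by
    rw [locallyIntegrable_iff]
    intro K hK
    obtain ⟨R, hR⟩ := hK.isBounded.subset_closedBall 0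
    set n : ℕ := ⌈max R 0⌉₊ with hndef
    have hKsub : K ⊆ Set.Icc (-(n:ℝ)) n := by
      refine subset_trans hR ?_
      rw [closedBall_real_eq]
      apply Set.Icc_subset_Icc
      · have h1 : R ≤ (n:ℝ) := le_trans (le_max_left _ _) (Nat.le_ceil _)
        linarith
      · exact le_trans (le_max_left _ _) (Nat.le_ceil _)
    haveI : IsFiniteMeasure ((volume : Measure ℝ).restrict (Set.Icc (-(n:ℝ)) n)) :=
      ⟨by rw [Measure.restrict_apply_univ]; exact measure_Icc_lt_top⟩
    have h1 : Integrable ((T.adjoint (χ n) : ℝ → ℂ))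
        ((volume : Measure ℝ).restrict (Set.Icc (-(n:ℝ)) n)) :=
      ((Lp.memLp (T.adjoint (χ n))).restrict _).integrable (by norm_num)
    have h2 : Integrable (v n) ((volume : Measure ℝ).restrict (Set.Icc (-(n:ℝ)) n)) := by
      apply h1.mono
      · exact (RCLike.continuous_conj (K := ℂ)).comp_aestronglyMeasurable
          (Lp.aestronglyMeasurable (T.adjoint (χ n))).restrict
      · filter_upwards with x
        rw [RCLike.norm_conj]
    have h3 : IntegrableOn m (Set.Icc (-(n:ℝ)) n) volume := by
      apply h2.congr
      rw [Filter.EventuallyEq, ae_restrict_iff' measurableSet_Icc]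
      filter_upwards [hm n] with x hx hmem
      exact (hx hmem).symm
    exact h3.mono_set hKsub
  -- translation invariance of m
  have hinvm : ∀ a : ℝ, (fun x => m (x + a)) =ᵐ[volume] m := by
    intro a
    have hstep : ∀ n : ℕ, ∀ᵐ x ∂(volume : Measure ℝ),
        ((x + a) ∈ Set.Icc (-(n:ℝ)) n → m (x + a) = m x) := by
      intro n
      have hga_mem : MemLp (fun x => (χ n : ℝ → ℂ) (x + a)) 2 (volume : Measure ℝ) :=
        (Lp.memLp (χ n)).comp_measurePreserving (measurePreserving_add_right volume a)
      set ga := hga_mem.toLp _ with hgadef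
      have hTga := hTtrans a (χ n) ga hga_mem.coeFn_toLp
      have hqmp := (measurePreserving_add_right volume a).quasiMeasurePreserving
      have hga_coe2 : (ga : ℝ → ℂ) =ᵐ[volume]
          fun x => (Set.Icc (-(n:ℝ)) n).indicator (fun _ => (1:ℂ)) (x + a) :=
        hga_mem.coeFn_toLp.trans (hqmp.ae_eq_comp (hχcoe n))
      set N : ℕ := n + ⌈|a|⌉₊ with hNdef
      have hga_supp : ∀ᵐ x ∂(volume : Measure ℝ),
          x ∉ Set.Icc (-(N:ℝ)) N → (ga : ℝ → ℂ) x = 0 := by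
        filter_upwards [hga_coe2] with x hx hxmem
        rw [hx]
        apply Set.indicator_of_notMem
        intro hmem
        apply hxmem
        rw [hmemIcc] at hmem ⊢
        have h1 : |x| ≤ |x + a| + |a| := by
          have := abs_add_le (x + a) (-a)
          simpa using this
        have h2 : |a| ≤ (⌈|a|⌉₊ : ℝ) := Nat.le_ceil _
        rw [hNdef]
        push_cast
        linarith
      have hTga2 : (T ga : ℝ → ℂ) =ᵐ[volume]
          fun x => m x * (Set.Icc (-(n:ℝ)) n).indicator (fun _ => (1:ℂ)) (x + a) := by
        refine (hP N ga hga_supp).trans ?_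
        filter_upwards [hga_coe2] with x hx
        rw [hx]
      have hTχ2 : (fun x => (T (χ n) : ℝ → ℂ) (x + a)) =ᵐ[volume]
          fun x => m (x + a) * (Set.Icc (-(n:ℝ)) n).indicator (fun _ => (1:ℂ)) (x + a) := by
        have h1 : (T (χ n) : ℝ → ℂ) =ᵐ[volume]
            fun x => m x * (Set.Icc (-(n:ℝ)) n).indicator (fun _ => (1:ℂ)) x := by
          refine (hP n (χ n) (hχsupp n)).trans ?_
          filter_upwards [hχcoe n] with x hx
          rw [hx]
        exact hqmp.ae_eq_comp h1
      have hcomb : (fun x => m x * (Set.Icc (-(n:ℝ)) n).indicator (fun _ => (1:ℂ)) (x + a))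
          =ᵐ[volume]
          fun x => m (x + a) * (Set.Icc (-(n:ℝ)) n).indicator (fun _ => (1:ℂ)) (x + a) :=
        hTga2.symm.trans (hTga.trans hTχ2)
      filter_upwards [hcomb] with x hx hmem
      rw [Set.indicator_of_mem hmem] at hx
      simp only [mul_one] at hx
      exact hx.symm
    have H : ∀ᵐ x ∂(volume : Measure ℝ), ∀ n : ℕ,
        ((x + a) ∈ Set.Icc (-(n:ℝ)) n → m (x + a) = m x) := ae_all_iff.mpr hstep
    filter_upwards [H] with x hx
    apply hx ⌈|x + a|⌉₊
    rw [hmemIcc]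
    exact Nat.le_ceil _
  -- translation invariance of integrals against m
  have hconv : ∀ (h : ℝ → ℂ), Continuous h → HasCompactSupport h →
      ∀ a : ℝ, (∫ x, m x * h (x + a)) = ∫ x, m x * h x := by
    intro h hc hcs a
    have e1 : (∫ x, m x * h (x + a)) = ∫ x, m (x + a) * h (x + a) := by
      apply integral_congr_ae
      filter_upwards [hinvm a] with x hx
      rw [hx]
    rw [e1]
    exact integral_add_right_eq_self (fun y => m y * h y) a
  -- the bump function and the constant
  set B : ContDiffBump (0:ℝ) := ⟨1, 2, one_pos, one_lt_two⟩ with hBdef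
  set φ0 : ℝ → ℝ := fun x => B.normed volume x with hφ0def
  have hφ0c : Continuous φ0 := B.continuous_normed
  have hφ0cs : HasCompactSupport φ0 := B.hasCompactSupport_normed
  have hφ0int : (∫ x, φ0 x) = 1 := B.integral_normed
  set c : ℂ := ∫ x, m x * (φ0 x : ℂ) with hcdef
  have hφ0C : Continuous (fun x => (φ0 x : ℂ)) := Complex.continuous_ofReal.comp hφ0c
  have hφ0CS : HasCompactSupport (fun x => (φ0 x : ℂ)) :=
    hφ0cs.comp_left (g := Complex.ofReal) Complex.ofReal_zero
  -- m is a.e. constant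
  have hmc : ∀ᵐ x ∂(volume : Measure ℝ), m x - c = 0 := by
    apply ae_eq_zero_of_integral_contDiff_smul_eq_zero
      (hmloc.sub (locallyIntegrable_const c))
    intro g hg hgs
    have hgC : Continuous (fun x => (g x : ℂ)) := Complex.continuous_ofReal.comp hg.continuous
    have hgCS : HasCompactSupport (fun x => (g x : ℂ)) :=
      hgs.comp_left (g := Complex.ofReal) Complex.ofReal_zero
    have hgint : Integrable g volume := hg.continuous.integrable_of_hasCompactSupport hgs
    set Ig : ℂ := ((∫ x, g x : ℝ) : ℂ) with hIgdef
    set ψ : ℝ → ℂ := fun x => (g x : ℂ) - Ig * (φ0 x : ℂ) with hψdef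
    have hψc : Continuous ψ := hgC.sub (continuous_const.mul hφ0C)
    have hψcs : HasCompactSupport ψ :=
      HasCompactSupport.comp₂_left hgCS (hφ0CS.mul_left) (sub_zero 0)
    have hφ0intC : Integrable (fun x => (φ0 x : ℂ)) volume :=
      (hφ0c.integrable_of_hasCompactSupport hφ0cs).ofReal
    have hgCint : Integrable (fun x => (g x : ℂ)) volume :=
      hgC.integrable_of_hasCompactSupport hgCS
    have hgIR : (∫ x, (g x : ℂ)) = Ig := integral_ofReal
    have hφIR : (∫ x, (φ0 x : ℂ)) = ((∫ x, φ0 x : ℝ) : ℂ) := integral_ofReal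
    have hψ0 : (∫ x, ψ x) = 0 := by
      have h6 : (∫ x, ((g x : ℂ) - Ig * (φ0 x : ℂ))) = (∫ x, (g x : ℂ)) - ∫ x, Ig * (φ0 x : ℂ) :=
        integral_sub hgCint (hφ0intC.const_mul _)
      have h7 : (∫ x, ψ x) = ∫ x, ((g x : ℂ) - Ig * (φ0 x : ℂ)) := rfl
      rw [h7, h6, integral_const_mul, hφIR, hφ0int, hgIR]
      simp
    have happ := integral_mul_eq_zero_of_mean_zero m hmloc hconv ψ hψc hψcs hψ0
    -- expand
    have hint1 : Integrable (fun x => m x * (g x : ℂ)) volume :=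
      mul_cpt_integrable m _ hmloc hgC hgCS
    have hint2 : Integrable (fun x => m x * (Ig * (φ0 x : ℂ))) volume :=
      mul_cpt_integrable m _ hmloc (continuous_const.mul hφ0C) (hφ0CS.mul_left)
    have hexp : (∫ x, m x * ψ x)
        = (∫ x, m x * (g x : ℂ)) - ∫ x, m x * (Ig * (φ0 x : ℂ)) := by
      rw [← integral_sub hint1 hint2]
      apply integral_congr_ae
      filter_upwards with x
      show m x * ((g x : ℂ) - Ig * (φ0 x : ℂ)) = _
      ring
    have h2 : (∫ x, m x * (Ig * (φ0 x : ℂ))) = Ig * c := by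
      rw [hcdef, ← integral_const_mul]
      apply integral_congr_ae
      filter_upwards with x
      ring
    have h3 : (∫ x, m x * (g x : ℂ)) = Ig * c := by
      rw [hexp, h2] at happ
      linear_combination happ
    -- conclude
    have h4 : (∫ x, g x • (m x - c)) = (∫ x, m x * (g x : ℂ)) - ∫ x, (g x : ℂ) * c := by
      rw [← integral_sub hint1 (hgCint.mul_const c)]
      apply integral_congr_ae
      filter_upwards with x
      rw [Complex.real_smul]
      ring
    have h5 : (∫ x, (g x : ℂ) * c) = Ig * c := by
      rw [integral_mul_const, hgIR]
    show (∫ x, g x • (m x - c)) = 0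
    rw [h4, h3, h5, sub_self]
  -- conclusion via density
  refine ⟨c, ?_⟩
  intro f
  have hSclosed : IsClosed {f : Lp ℂ 2 (volume : Measure ℝ) | T f = c • f} :=
    isClosed_eq T.continuous (continuous_const_smul c)
  suffices hf : f ∈ closure {f : Lp ℂ 2 (volume : Measure ℝ) | T f = c • f} by
    rw [hSclosed.closure_eq] at hf
    exact hf
  rw [Metric.mem_closure_iff]
  intro δ hδ
  obtain ⟨g, hgcs, hgnorm, hgc, hgmem⟩ :=
    (Lp.memLp f).exists_hasCompactSupport_eLpNorm_sub_le (by norm_num : (2:ENNReal) ≠ ⊤)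
      (show ENNReal.ofReal (δ/2) ≠ 0 from ne_of_gt (ENNReal.ofReal_pos.mpr (by linarith)))
  set gl : Lp ℂ 2 (volume : Measure ℝ) := hgmem.toLp g with hgldef
  obtain ⟨R, hR⟩ := hgcs.isBounded.subset_closedBall 0
  set n : ℕ := ⌈max R 0⌉₊ with hndef
  have hgzero : ∀ x : ℝ, x ∉ Set.Icc (-(n:ℝ)) n → g x = 0 := by
    intro x hx
    apply image_eq_zero_of_notMem_tsupport
    intro hmem
    apply hx
    have h1 := hR hmem
    rw [closedBall_real_eq] at h1
    have h2 : R ≤ (n:ℝ) := le_trans (le_max_left _ _) (Nat.le_ceil _)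
    rw [Set.mem_Icc] at h1 ⊢
    exact ⟨by linarith [h1.1], by linarith [h1.2]⟩
  have hglsupp : ∀ᵐ x ∂(volume : Measure ℝ),
      x ∉ Set.Icc (-(n:ℝ)) n → (gl : ℝ → ℂ) x = 0 := by
    filter_upwards [hgmem.coeFn_toLp] with x hx hxmem
    rw [hx]
    exact hgzero x hxmem
  have hglS : T gl = c • gl := by
    apply Lp.ext
    filter_upwards [hP n gl hglsupp, hmc, Lp.coeFn_smul c gl] with x h1 h2 h3
    rw [h1, h3]
    have : m x = c := by linear_combination h2
    rw [this]
    simp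
  refine ⟨gl, hglS, ?_⟩
  rw [dist_eq_norm, Lp.norm_def]
  have hcoe : (↑↑(f - gl) : ℝ → ℂ) =ᵐ[volume] ((f : ℝ → ℂ) - g) := by
    filter_upwards [Lp.coeFn_sub f gl, hgmem.coeFn_toLp] with x h1 h2
    rw [h1]
    simp only [Pi.sub_apply]
    rw [h2]
  rw [eLpNorm_congr_ae hcoe]
  have h1 : (eLpNorm ((f : ℝ → ℂ) - g) 2 volume).toReal ≤ δ/2 :=
    ENNReal.toReal_le_of_le_ofReal (by linarith) hgnorm
  linarith

end HeisenbergCommutant
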